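/- The homogeneity characteristic 𝐡𝐨𝐦 is at least the maximum of the unsplitting number 𝔯 and the dominating number 𝔡: max{𝔯, 𝔡} ≤ 𝐡𝐨𝐦. -/
import Mathlib


open Cardinal Set Filter

/-- `H` is homogeneous for the 2-coloring `c` of pairs. -/
def Homog2 (c : Finset ℕ → Bool) (H : Set ℕ) : Prop :=
  ∃ i : Bool, ∀ a ∈ H, ∀ b ∈ H, a ≠ b → c {a, b} = i

/-- `H` is almost homogeneous for `c`: homogeneous after removing a finite subset. -/
def AlmostHomog2 (c : Finset ℕ → Bool) (H : Set ℕ) : Prop :=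
  ∃ F : Set ℕ, F.Finite ∧ F ⊆ H ∧ Homog2 c (H \ F)

/-- The homogeneity characteristic 𝐡𝐨𝐦. -/
noncomputable def homNum : Cardinal :=
  sInf {κ : Cardinal | ∃ ℋ : Set (Set ℕ), (∀ H ∈ ℋ, H.Infinite) ∧
    (∀ c : Finset ℕ → Bool, ∃ H ∈ ℋ, AlmostHomog2 c H) ∧ κ = #ℋ}

/-- `g` eventually majorizes `f`. -/
def EvMaj (g f : ℕ → ℕ) : Prop := ∀ᶠ n in Filter.atTop, f n < g n

/-- The dominating number 𝔡. -/
noncomputable def domNum : Cardinal :=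
  sInf {c : Cardinal | ∃ D : Set (ℕ → ℕ),
    (∀ f : ℕ → ℕ, ∃ g ∈ D, EvMaj g f) ∧ c = #D}

/-- `X` splits `Y`: both `X ∩ Y` and `Y \ X` are infinite. -/
def Splits (X Y : Set ℕ) : Prop := (X ∩ Y).Infinite ∧ (Y \ X).Infinite

/-- The unsplitting (reaping) number 𝔯. -/
noncomputable def unsplitNum : Cardinal :=
  sInf {c : Cardinal | ∃ R : Set (Set ℕ),
    (∀ Y ∈ R, Y.Infinite) ∧ (∀ X : Set ℕ, ∃ Y ∈ R, ¬ Splits X Y) ∧ c = #R}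


/-- Recursive sequence picking elements of `A` that are in all `B (previous)` and above all previous. -/
noncomputable def rseq (A : Set ℕ) (B : ℕ → Set ℕ) : ℕ → ℕ
  | n => sInf {m | m ∈ A ∧ ∀ k, ∀ _h : k < n, m ∈ B (rseq A B k) ∧ rseq A B k < m}
termination_by n => n
decreasing_by exact _h

lemma rseq_mem (U : Ultrafilter ℕ) (hcof : (U : Filter ℕ) ≤ cofinite)
    (A : Set ℕ) (hA : A ∈ U) (B : ℕ → Set ℕ) (hB : ∀ a ∈ A, B a ∈ U) :
    ∀ n, rseq A B n ∈ {m | m ∈ A ∧ ∀ k, ∀ _h : k < n, m ∈ B (rseq A B k) ∧ rseq A B k < m} := by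
  intro n
  induction n using Nat.strong_induction_on with
  | _ n ih =>
    have hset : {m | m ∈ A ∧ ∀ k, ∀ _h : k < n, m ∈ B (rseq A B k) ∧ rseq A B k < m}
        = A ∩ ⋂ k ∈ Set.Iio n, (B (rseq A B k) ∩ Set.Ioi (rseq A B k)) := by
      ext m
      simp only [Set.mem_setOf_eq, Set.mem_inter_iff, Set.mem_iInter, Set.mem_Iio, Set.mem_Ioi]

    have hU : {m | m ∈ A ∧ ∀ k, ∀ _h : k < n, m ∈ B (rseq A B k) ∧ rseq A B k < m} ∈ U := by
      rw [hset]
      refine Filter.inter_mem hA ?_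
      refine (Filter.biInter_mem (Set.finite_Iio n)).mpr ?_
      intro k hk
      refine Filter.inter_mem (hB _ (ih k hk).1) (hcof ?_)
      rw [Filter.mem_cofinite, Set.compl_Ioi]
      exact Set.finite_Iic _
    have hne : {m | m ∈ A ∧ ∀ k, ∀ _h : k < n, m ∈ B (rseq A B k) ∧ rseq A B k < m}.Nonempty :=
      Filter.nonempty_of_mem hU
    rw [rseq]
    exact Nat.sInf_mem hne

/-- Infinite Ramsey theorem for pairs. -/
lemma ramsey2' (c : Finset ℕ → Bool) :
    ∃ H : Set ℕ, H.Infinite ∧ ∃ i : Bool, ∀ a ∈ H, ∀ b ∈ H, a ≠ b → c {a, b} = i := by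
  classical
  set U : Ultrafilter ℕ := Ultrafilter.of cofinite with hUdef
  have hcof : (U : Filter ℕ) ≤ cofinite := Ultrafilter.of_le cofinite
  set i : ℕ → Bool := fun a => if {b | c {a, b} = true} ∈ U then true else false with hidef
  have hBmem : ∀ a : ℕ, {b | c {a, b} = i a} ∈ U := by
    intro a
    by_cases h : {b | c {a, b} = true} ∈ U
    · simp [hidef, h]
    · have : {b | c {a, b} = false} = {b | c {a, b} = true}ᶜ := by
        ext b; simp [Bool.not_eq_true]
      simp only [hidef, if_neg h]
      rw [this]
      exact (Ultrafilter.compl_mem_iff_notMem).mpr h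
  set istar : Bool := if {a | i a = true} ∈ U then true else false with histar
  have hAmem : {a | i a = istar} ∈ U := by
    by_cases h : {a | i a = true} ∈ U
    · simp [histar, h]
    · have : {a | i a = false} = {a | i a = true}ᶜ := by
        ext a; simp [Bool.not_eq_true]
      simp only [histar, if_neg h]
      rw [this]
      exact (Ultrafilter.compl_mem_iff_notMem).mpr h
  set A : Set ℕ := {a | i a = istar}
  set B : ℕ → Set ℕ := fun a => {b | c {a, b} = i a}
  have hspec := rseq_mem U hcof A hAmem B (fun a _ => hBmem a)
  set f : ℕ → ℕ := rseq A B with hf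
  have hmono : StrictMono f := fun k n hkn => ((hspec n).2 k hkn).2
  refine ⟨Set.range f, Set.infinite_range_of_injective hmono.injective, istar, ?_⟩
  rintro a ⟨k, rfl⟩ b ⟨n, rfl⟩ hne
  have key : ∀ k n : ℕ, k < n → c {f k, f n} = istar := by
    intro k n hkn
    have h1 : f n ∈ B (f k) := ((hspec n).2 k hkn).1
    have h2 : i (f k) = istar := (hspec k).1
    simpa [B, h2] using h1
  rcases lt_or_gt_of_ne (fun h : k = n => hne (by rw [h])) with h | h
  · exact key k n h
  · rw [Finset.pair_comm]; exact key n k h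






/-- auxiliary "second element of `H` above `n`" function. -/
noncomputable def gfun (H : Set ℕ) (n : ℕ) : ℕ :=
  sInf {m | m ∈ H ∧ ∃ a, a ∈ H ∧ n < a ∧ a < m}

lemma hom_unsplit (ℋ : Set (Set ℕ)) (h1 : ∀ H ∈ ℋ, H.Infinite)
    (h2 : ∀ c : Finset ℕ → Bool, ∃ H ∈ ℋ, AlmostHomog2 c H) :
    ∀ X : Set ℕ, ∃ Y ∈ ℋ, ¬ Splits X Y := by
  classical
  intro X
  set c : Finset ℕ → Bool :=
    fun s => decide ((∀ a ∈ s, a ∈ X) ∨ (∀ a ∈ s, a ∉ X)) with hc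
  obtain ⟨H, hHmem, F, hFfin, hFsub, i, hi⟩ := h2 c
  have hpair : ∀ a b : ℕ, (c {a, b} = true ↔ ((a ∈ X ∧ b ∈ X) ∨ (a ∉ X ∧ b ∉ X))) := by
    intro a b
    have heq : ((∀ x ∈ ({a, b} : Finset ℕ), x ∈ X) ∨ (∀ x ∈ ({a, b} : Finset ℕ), x ∉ X))
        ↔ ((a ∈ X ∧ b ∈ X) ∨ (a ∉ X ∧ b ∉ X)) := by
      simp [Finset.forall_mem_insert]
    simp only [hc, decide_eq_true_eq]
    exact heq
  have hH'inf : (H \ F).Infinite := (h1 H hHmem).diff hFfin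
  refine ⟨H, hHmem, ?_⟩
  cases i with
  | false =>
    -- impossible: take three distinct elements
    exfalso
    obtain ⟨a, ha⟩ := hH'inf.nonempty
    obtain ⟨b, hb⟩ := (hH'inf.diff (Set.finite_singleton a)).nonempty
    obtain ⟨d, hd⟩ := ((hH'inf.diff (Set.finite_singleton a)).diff (Set.finite_singleton b)).nonempty
    have hba : b ≠ a := by simpa using hb.2
    have hdb : d ≠ b := by simpa using hd.2
    have hda : d ≠ a := by simpa using hd.1.2
    have h1' := hi a ha b hb.1 (Ne.symm hba)
    have h2' := hi a ha d hd.1.1 (Ne.symm hda)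
    have h3' := hi b hb.1 d hd.1.1 (Ne.symm hdb)
    have e1 : ¬ ((a ∈ X ∧ b ∈ X) ∨ (a ∉ X ∧ b ∉ X)) := by
      rw [← hpair a b]; simp [h1']
    have e2 : ¬ ((a ∈ X ∧ d ∈ X) ∨ (a ∉ X ∧ d ∉ X)) := by
      rw [← hpair a d]; simp [h2']
    have e3 : ¬ ((b ∈ X ∧ d ∈ X) ∨ (b ∉ X ∧ d ∉ X)) := by
      rw [← hpair b d]; simp [h3']
    tauto
  | true =>
    obtain ⟨a₀, ha₀⟩ := hH'inf.nonempty
    by_cases hx : a₀ ∈ X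
    · -- H \ X ⊆ F, so H \ X finite
      have hsub : H \ X ⊆ F := by
        intro m hm
        by_contra hmF
        have hm' : m ∈ H \ F := ⟨hm.1, hmF⟩
        have hne : a₀ ≠ m := fun h => hm.2 (h ▸ hx)
        have hmX : m ∉ X := hm.2
        have := (hpair a₀ m).mp (hi a₀ ha₀ m hm' hne)
        tauto
      rintro ⟨-, hinf2⟩
      exact hinf2 (hFfin.subset hsub)
    · have hsub : X ∩ H ⊆ F := by
        intro m hm
        by_contra hmF
        have hm' : m ∈ H \ F := ⟨hm.2, hmF⟩
        have hne : a₀ ≠ m := fun h => hx (h ▸ hm.1)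
        have hmX : m ∈ X := hm.1
        have := (hpair a₀ m).mp (hi a₀ ha₀ m hm' hne)
        tauto
      rintro ⟨hinf1, -⟩
      exact hinf1 (hFfin.subset hsub)

lemma hom_dom (ℋ : Set (Set ℕ)) (h1 : ∀ H ∈ ℋ, H.Infinite)
    (h2 : ∀ c : Finset ℕ → Bool, ∃ H ∈ ℋ, AlmostHomog2 c H) :
    ∀ f : ℕ → ℕ, ∃ g ∈ gfun '' ℋ, EvMaj g f := by
  classical
  intro f
  set f' : ℕ → ℕ := fun n => (Finset.range (n + 1)).sup f + n + 1 with hf'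
  have hf'mono : Monotone f' := by
    intro m n hmn
    have h1' : (Finset.range (m + 1)).sup f ≤ (Finset.range (n + 1)).sup f :=
      Finset.sup_mono (Finset.range_subset_range.mpr (by omega))
    simp only [hf']
    omega
  have hf'lt : ∀ n, f n < f' n := by
    intro n
    have : f n ≤ (Finset.range (n + 1)).sup f :=
      Finset.le_sup (Finset.mem_range.mpr (Nat.lt_succ_self n))
    simp only [hf']
    omega
  set c : Finset ℕ → Bool :=
    fun s => decide (∃ a ∈ s, ∃ b ∈ s, a < b ∧ b < f' a) with hc
  have hpair : ∀ a b : ℕ, a < b → (c {a, b} = true ↔ b < f' a) := by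
    intro a b hab
    have hiff : (∃ x ∈ ({a, b} : Finset ℕ), ∃ y ∈ ({a, b} : Finset ℕ), x < y ∧ y < f' x)
        ↔ b < f' a := by
      simp only [Finset.mem_insert, Finset.mem_singleton]
      constructor
      · rintro ⟨x, hx, y, hy, hxy, hlt⟩
        rcases hx with rfl | rfl <;> rcases hy with rfl | rfl
        · exact absurd hxy (lt_irrefl _)
        · exact hlt
        · exact absurd hab (by omega)
        · exact absurd hxy (lt_irrefl _)
      · intro h; exact ⟨a, Or.inl rfl, b, Or.inr rfl, hab, h⟩
    simp only [hc, decide_eq_true_eq]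
    exact hiff
  obtain ⟨H, hHmem, F, hFfin, hFsub, i, hi⟩ := h2 c
  have hH'inf : (H \ F).Infinite := (h1 H hHmem).diff hFfin
  have hifalse : i = false := by
    by_contra hit
    have hit : i = true := by cases i <;> simp_all
    obtain ⟨a, ha⟩ := hH'inf.nonempty
    have hsub : H \ F ⊆ Set.Iic a ∪ Set.Iio (f' a) := by
      intro m hm
      by_cases hma : m ≤ a
      · exact Or.inl hma
      · have hne : a ≠ m := by omega
        have := (hpair a m (by omega)).mp (hit ▸ hi a ha m hm hne)
        exact Or.inr this
    exact hH'inf ((Set.finite_Iic a).union (Set.finite_Iio (f' a)) |>.subset hsub)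
  have hgood : ∀ a ∈ H \ F, ∀ b ∈ H \ F, a < b → f' a ≤ b := by
    intro a ha b hb hab
    have := hi a ha b hb (by omega)
    rw [hifalse] at this
    by_contra hlt
    have : c {a, b} = true := (hpair a b hab).mpr (by omega)
    simp_all
  obtain ⟨N, hN⟩ := hFfin.bddAbove
  refine ⟨gfun H, ⟨H, hHmem, rfl⟩, ?_⟩
  rw [EvMaj, Filter.eventually_atTop]
  refine ⟨N + 1, fun n hn => ?_⟩
  have hHinf := h1 H hHmem
  -- the defining set of gfun H n is nonempty
  obtain ⟨a₁, ha₁⟩ := (hHinf.diff (Set.finite_Iic n)).nonempty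
  obtain ⟨m₁, hm₁⟩ := (hHinf.diff (Set.finite_Iic a₁)).nonempty
  have hTne : {m | m ∈ H ∧ ∃ a, a ∈ H ∧ n < a ∧ a < m}.Nonempty := by
    refine ⟨m₁, hm₁.1, a₁, ha₁.1, ?_, ?_⟩
    · simpa using ha₁.2
    · simpa using hm₁.2
  have hmem : gfun H n ∈ {m | m ∈ H ∧ ∃ a, a ∈ H ∧ n < a ∧ a < m} := Nat.sInf_mem hTne
  obtain ⟨hgH, a, haH, hna, hag⟩ := hmem
  have haF : a ∉ F := fun h => by have := hN h; omega
  have hgF : gfun H n ∉ F := fun h => by have := hN h; omega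
  have h5 : f' a ≤ gfun H n := hgood a ⟨haH, haF⟩ _ ⟨hgH, hgF⟩ hag
  have h6 : f' n ≤ f' a := hf'mono (by omega)
  have h7 := hf'lt n
  omega

theorem max_le_homNum : max unsplitNum domNum ≤ homNum := by
  have hne : {κ : Cardinal | ∃ ℋ : Set (Set ℕ), (∀ H ∈ ℋ, H.Infinite) ∧
      (∀ c : Finset ℕ → Bool, ∃ H ∈ ℋ, AlmostHomog2 c H) ∧ κ = #ℋ}.Nonempty := by
    refine ⟨#{H : Set ℕ | H.Infinite}, {H : Set ℕ | H.Infinite}, fun H h => h, fun c => ?_, rfl⟩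
    obtain ⟨H, hinf, hhom⟩ := ramsey2' c
    exact ⟨H, hinf, ∅, Set.finite_empty, Set.empty_subset _, by rwa [Set.diff_empty]⟩
  rw [homNum]
  refine le_csInf hne ?_
  rintro κ ⟨ℋ, h1, h2, rfl⟩
  apply max_le
  · exact csInf_le' ⟨ℋ, h1, hom_unsplit ℋ h1 h2, rfl⟩
  · calc domNum ≤ #(gfun '' ℋ) := csInf_le' ⟨gfun '' ℋ, hom_dom ℋ h1 h2, rfl⟩
      _ ≤ #ℋ := Cardinal.mk_image_le
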